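/- Characteristic polynomial of the generalized reduction: let Σ be an n×k complex matrix with orthonormal columns, and Δ an n×(n−k) matrix whose columns form an orthonormal basis for the orthogonal complement of the column space of Σ. Then det(λI − R(λ, Σ, A)) = det(λI − A) / det(λI − Δ*AΔ), for λ where all expressions are defined. -/

import Mathlib

open Matrix

/-- Generalized isospectral reduction of `A` with respect to a matrix `S` with
orthonormal columns. -/
noncomputable def genred {n k : Type} [Fintype n] [Fintype k] [DecidableEq n] [DecidableEq k]
    (lam : ℂ) (S : Matrix n k ℂ) (A : Matrix n n ℂ) : Matrix k k ℂ :=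
  lam • (1 : Matrix k k ℂ) - (Sᴴ * (lam • (1 : Matrix n n ℂ) - A)⁻¹ * S)⁻¹

theorem stmt_10 (n k m : ℕ)
    (A : Matrix (Fin n) (Fin n) ℂ)
    (S : Matrix (Fin n) (Fin k) ℂ) (Δ : Matrix (Fin n) (Fin m) ℂ)
    (hS : Sᴴ * S = 1) (hΔ : Δᴴ * Δ = 1) (horth : Sᴴ * Δ = 0)
    (hcomplete : S * Sᴴ + Δ * Δᴴ = 1)  -- columns of `Δ` span the orthogonal complement
    (lam : ℂ)
    (hA : IsUnit (lam • (1 : Matrix (Fin n) (Fin n) ℂ) - A).det)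
    (hc : IsUnit (Sᴴ * (lam • (1 : Matrix (Fin n) (Fin n) ℂ) - A)⁻¹ * S).det)
    (hd : IsUnit (lam • (1 : Matrix (Fin m) (Fin m) ℂ) - Δᴴ * A * Δ).det) :
    (lam • (1 : Matrix (Fin k) (Fin k) ℂ) - genred lam S A).det =
      (lam • (1 : Matrix (Fin n) (Fin n) ℂ) - A).det /
        (lam • (1 : Matrix (Fin m) (Fin m) ℂ) - Δᴴ * A * Δ).det := by
  set M : Matrix (Fin n) (Fin n) ℂ := lam • (1 : Matrix (Fin n) (Fin n) ℂ) - A with hM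
  set D : Matrix (Fin m) (Fin m) ℂ := lam • (1 : Matrix (Fin m) (Fin m) ℂ) - Δᴴ * A * Δ with hD
  have hΔS : Δᴴ * S = 0 := by
    have := congrArg conjTranspose horth
    simpa [conjTranspose_mul] using this
  -- n = k + m via trace
  have hnkm : n = k + m := by
    have h1 : ((S * Sᴴ + Δ * Δᴴ).trace : ℂ) = (1 : Matrix (Fin n) (Fin n) ℂ).trace := by
      rw [hcomplete]
    rw [trace_add, trace_mul_comm S Sᴴ, trace_mul_comm Δ Δᴴ, hS, hΔ] at h1
    simp only [trace_one, Fintype.card_fin] at h1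
    exact_mod_cast h1.symm
  let e : Fin n ≃ Fin k ⊕ Fin m := (finCongr hnkm).trans finSumFinEquiv.symm
  -- block matrices
  set P : Matrix (Fin k ⊕ Fin m) (Fin n) ℂ := fromRows Sᴴ Δᴴ with hP
  set Pc : Matrix (Fin n) (Fin k ⊕ Fin m) ℂ := fromCols S Δ with hPc
  have hPPc : P * Pc = 1 := by
    rw [hP, hPc, fromRows_mul_fromCols, hS, hΔ, horth, hΔS, ← fromBlocks_one]
  have hPcP : Pc * P = 1 := by
    rw [hPc, hP, fromCols_mul_fromRows, hcomplete]
  have hDblock : Δᴴ * M * Δ = D := by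
    rw [hM, hD, Matrix.mul_sub, Matrix.sub_mul]
    simp [Matrix.mul_smul, Matrix.smul_mul, hΔ]
  set N : Matrix (Fin k ⊕ Fin m) (Fin k ⊕ Fin m) ℂ := P * M * Pc with hN
  have hNblocks : N = fromBlocks (Sᴴ * M * S) (Sᴴ * M * Δ) (Δᴴ * M * S) D := by
    rw [hN, hP, hPc, fromRows_mul, fromRows_mul_fromCols, hDblock]
  -- det N = det M
  have hdetN : N.det = M.det := by
    have h1 : N.det = (N.submatrix e e).det := (det_submatrix_equiv_self e N).symm
    have h2 : N.submatrix e e = (P.submatrix e id) * M * (Pc.submatrix id e) := by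
      rw [hN]; ext i j; simp [submatrix_apply, mul_apply]
    have h3 : (P.submatrix e id) * (Pc.submatrix id e) = 1 := by
      have h : (P.submatrix e id) * (Pc.submatrix id e) = (P * Pc).submatrix e e := by
        ext i j; simp [submatrix_apply, mul_apply]
      rw [h, hPPc, submatrix_one_equiv]
    have h4 : (P.submatrix e id).det * (Pc.submatrix id e).det = 1 := by
      rw [← det_mul, h3, det_one]
    rw [h1, h2, det_mul, det_mul]
    calc (P.submatrix e id).det * M.det * (Pc.submatrix id e).det
        = M.det * ((P.submatrix e id).det * (Pc.submatrix id e).det) := by ring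
      _ = M.det := by rw [h4, mul_one]
  -- invertibility
  haveI iM : Invertible M := M.invertibleOfIsUnitDet hA
  haveI iD : Invertible D := D.invertibleOfIsUnitDet hd
  have hdet2 : M.det = D.det *
      (Sᴴ * M * S - (Sᴴ * M * Δ) * ⅟D * (Δᴴ * M * S)).det := by
    rw [← hdetN, hNblocks, det_fromBlocks₂₂]
  have hScUnit : IsUnit (Sᴴ * M * S - (Sᴴ * M * Δ) * ⅟D * (Δᴴ * M * S)).det := by
    have : IsUnit (D.det * (Sᴴ * M * S - (Sᴴ * M * Δ) * ⅟D * (Δᴴ * M * S)).det) :=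
      hdet2 ▸ hA
    exact isUnit_of_mul_isUnit_right this
  haveI iSc : Invertible (Sᴴ * M * S - (Sᴴ * M * Δ) * ⅟D * (Δᴴ * M * S)) :=
    invertibleOfIsUnitDet _ hScUnit
  -- N⁻¹ = P * M⁻¹ * Pc
  have hMMinv : M * M⁻¹ = 1 := mul_nonsing_inv M hA
  have hNinv : N⁻¹ = P * M⁻¹ * Pc := by
    apply inv_eq_right_inv
    have h : N * (P * M⁻¹ * Pc) = P * (M * ((Pc * P) * (M⁻¹ * Pc))) := by
      rw [hN]; simp only [Matrix.mul_assoc]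
    rw [h, hPcP, Matrix.one_mul, ← Matrix.mul_assoc M, hMMinv, Matrix.one_mul, hPPc]
  -- top-left block of N⁻¹
  have hNinv2 : N⁻¹ = fromBlocks
      (⅟(Sᴴ * M * S - (Sᴴ * M * Δ) * ⅟D * (Δᴴ * M * S)))
      (-(⅟(Sᴴ * M * S - (Sᴴ * M * Δ) * ⅟D * (Δᴴ * M * S)) * (Sᴴ * M * Δ) * ⅟D))
      (-(⅟D * (Δᴴ * M * S) * ⅟(Sᴴ * M * S - (Sᴴ * M * Δ) * ⅟D * (Δᴴ * M * S))))
      (⅟D + ⅟D * (Δᴴ * M * S) * ⅟(Sᴴ * M * S - (Sᴴ * M * Δ) * ⅟D * (Δᴴ * M * S))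
        * (Sᴴ * M * Δ) * ⅟D) := by
    letI iFB : Invertible (fromBlocks (Sᴴ * M * S) (Sᴴ * M * Δ) (Δᴴ * M * S) D) :=
      fromBlocks₂₂Invertible _ _ _ _
    rw [hNblocks, ← invOf_eq_nonsing_inv]
    exact invOf_fromBlocks₂₂_eq _ _ _ _
  have hNinv3 : P * M⁻¹ * Pc =
      fromBlocks (Sᴴ * M⁻¹ * S) (Sᴴ * M⁻¹ * Δ) (Δᴴ * M⁻¹ * S) (Δᴴ * M⁻¹ * Δ) := by
    rw [hP, hPc, fromRows_mul, fromRows_mul_fromCols]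
  have key : Sᴴ * M⁻¹ * S = ⅟(Sᴴ * M * S - (Sᴴ * M * Δ) * ⅟D * (Δᴴ * M * S)) := by
    have h := hNinv.symm.trans hNinv2
    rw [hNinv3] at h
    have h2 := congrArg Matrix.toBlocks₁₁ h
    simpa [toBlocks_fromBlocks₁₁] using h2
  -- final determinant computation
  have hgen : lam • (1 : Matrix (Fin k) (Fin k) ℂ) - genred lam S A = (Sᴴ * M⁻¹ * S)⁻¹ := by
    rw [genred, ← hM, sub_sub_cancel]
  rw [hgen, key, invOf_eq_nonsing_inv, nonsing_inv_nonsing_inv _ hScUnit]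
  have hDne : D.det ≠ 0 := hd.ne_zero
  rw [eq_div_iff hDne, hdet2]
  ring
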